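/- Suppose the aggregation map φ satisfies: φ(s1) = φ(s2) implies |Q*(s1, a) − Q*(s2, a)| ≤ ε for all a ∈ A1×A2, for some ε ≥ 0. Then for every s ∈ S, V^{π1†, π_GA,2*}(s) − V^{π_GA*}(s) ≤ 6ε/(1−γ)³. -/

import Mathlib

open Finset

/-- A mixed Markov policy: a probability distribution over actions at each state. -/
def IsPolicy {S A : Type*} [Fintype A] (π : S → A → ℝ) : Prop :=
  (∀ s a, 0 ≤ π s a) ∧ ∀ s, ∑ a, π s a = 1

/-- A transition kernel: a probability distribution over next states for every
state and joint action. -/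
def IsKernel {S A1 A2 : Type*} [Fintype S] (P : S → A1 → A2 → S → ℝ) : Prop :=
  (∀ s a1 a2 s', 0 ≤ P s a1 a2 s') ∧ ∀ s a1 a2, ∑ s', P s a1 a2 s' = 1

/-- Rewards lie in `[0,1]`. -/
def IsReward {S A1 A2 : Type*} (R : S → A1 → A2 → ℝ) : Prop :=
  ∀ s a1 a2, 0 ≤ R s a1 a2 ∧ R s a1 a2 ≤ 1

/-- The state-action value induced by a state value function `V`:
`Q(s,a) = R(s,a) + γ * Σ_{s'} P(s'|s,a) V(s')`. -/
def Qf {S A1 A2 : Type*} [Fintype S] (R : S → A1 → A2 → ℝ) (P : S → A1 → A2 → S → ℝ)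
    (γ : ℝ) (V : S → ℝ) (s : S) (a1 : A1) (a2 : A2) : ℝ :=
  R s a1 a2 + γ * ∑ s', P s a1 a2 s' * V s'

/-- `V` satisfies the Bellman equation for the policy profile `(π1, π2)`. -/
def IsValue {S A1 A2 : Type*} [Fintype S] [Fintype A1] [Fintype A2]
    (R : S → A1 → A2 → ℝ) (P : S → A1 → A2 → S → ℝ) (γ : ℝ)
    (π1 : S → A1 → ℝ) (π2 : S → A2 → ℝ) (V : S → ℝ) : Prop :=
  ∀ s, V s = ∑ a1, ∑ a2, π1 s a1 * π2 s a2 * Qf R P γ V s a1 a2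

/-- `Val` assigns to every policy profile its value function. -/
def IsValueOperator {S A1 A2 : Type*} [Fintype S] [Fintype A1] [Fintype A2]
    (R : S → A1 → A2 → ℝ) (P : S → A1 → A2 → S → ℝ) (γ : ℝ)
    (Val : (S → A1 → ℝ) → (S → A2 → ℝ) → S → ℝ) : Prop :=
  ∀ π1 π2, IsPolicy π1 → IsPolicy π2 → IsValue R P γ π1 π2 (Val π1 π2)

/-- `(π1, π2)` is a Nash equilibrium of the game whose values are given by `Val`:
for all states `s` and all policies `π1'`, `π2'`,
`Val π1 π2' s ≥ Val π1 π2 s ≥ Val π1' π2 s`. -/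
def IsNash {S A1 A2 : Type*} [Fintype A1] [Fintype A2]
    (Val : (S → A1 → ℝ) → (S → A2 → ℝ) → S → ℝ)
    (π1 : S → A1 → ℝ) (π2 : S → A2 → ℝ) : Prop :=
  IsPolicy π1 ∧ IsPolicy π2 ∧
    ∀ s, ∀ π1' π2', IsPolicy π1' → IsPolicy π2' →
      Val π1 π2' s ≥ Val π1 π2 s ∧ Val π1 π2 s ≥ Val π1' π2 s

/-- `π1d` is a best response for player 1 against the player-2 policy `π2`:
`Val π1d π2 s = max_{π1} Val π1 π2 s` for every state `s`. -/
def IsBestResponse1 {S A1 A2 : Type*} [Fintype A1]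
    (Val : (S → A1 → ℝ) → (S → A2 → ℝ) → S → ℝ)
    (π1d : S → A1 → ℝ) (π2 : S → A2 → ℝ) : Prop :=
  IsPolicy π1d ∧ ∀ π1, IsPolicy π1 → ∀ s, Val π1 π2 s ≤ Val π1d π2 s

/-- A weight function for the aggregation map `φ`: weights lie in `[0,1]` and sum
to one within each aggregated class. -/
def IsAggWeight {S SA : Type*} [Fintype S] [DecidableEq SA] (φ : S → SA) (w : S → ℝ) : Prop :=
  (∀ s, 0 ≤ w s ∧ w s ≤ 1) ∧ ∀ sA : SA, ∑ s ∈ univ.filter (fun s => φ s = sA), w s = 1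

/-- The abstract transition kernel:
`P_A(s_A'|s_A,a) = Σ_{s : φ s = s_A} Σ_{s' : φ s' = s_A'} P(s'|s,a) w(s)`. -/
def PA {S SA A1 A2 : Type*} [Fintype S] [DecidableEq SA]
    (P : S → A1 → A2 → S → ℝ) (φ : S → SA) (w : S → ℝ)
    (sA : SA) (a1 : A1) (a2 : A2) (sA' : SA) : ℝ :=
  ∑ s ∈ univ.filter (fun s => φ s = sA),
    ∑ s' ∈ univ.filter (fun s' => φ s' = sA'), P s a1 a2 s' * w s

/-- The abstract reward function:
`R_A(s_A,a) = Σ_{s : φ s = s_A} R(s,a) w(s)`. -/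
def RA {S SA A1 A2 : Type*} [Fintype S] [DecidableEq SA]
    (R : S → A1 → A2 → ℝ) (φ : S → SA) (w : S → ℝ)
    (sA : SA) (a1 : A1) (a2 : A2) : ℝ :=
  ∑ s ∈ univ.filter (fun s => φ s = sA), R s a1 a2 * w s

set_option linter.unusedSectionVars false

namespace ZGaux

variable {σ A1 A2 : Type*} [Fintype σ] [Fintype A1] [Fintype A2]

/-- Bellman operator for a fixed policy pair. -/
def Tpi (R : σ → A1 → A2 → ℝ) (P : σ → A1 → A2 → σ → ℝ) (γ : ℝ)
    (π1 : σ → A1 → ℝ) (π2 : σ → A2 → ℝ) (V : σ → ℝ) (s : σ) : ℝ :=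
  ∑ a1, ∑ a2, π1 s a1 * π2 s a2 * Qf R P γ V s a1 a2

variable {R : σ → A1 → A2 → ℝ} {P : σ → A1 → A2 → σ → ℝ} {γ : ℝ}
  {π1 : σ → A1 → ℝ} {π2 : σ → A2 → ℝ}

lemma Qf_mono (hP : IsKernel P) (hγ0 : 0 ≤ γ) {V W : σ → ℝ} (hVW : ∀ s, V s ≤ W s)
    (s : σ) (a1 : A1) (a2 : A2) : Qf R P γ V s a1 a2 ≤ Qf R P γ W s a1 a2 := by
  unfold Qf
  have h : ∑ s', P s a1 a2 s' * V s' ≤ ∑ s', P s a1 a2 s' * W s' :=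
    Finset.sum_le_sum fun s' _ => mul_le_mul_of_nonneg_left (hVW s') (hP.1 s a1 a2 s')
  nlinarith

lemma Qf_shift (hP : IsKernel P) {V : σ → ℝ} (c : ℝ) (s : σ) (a1 : A1) (a2 : A2) :
    Qf R P γ (fun t => V t + c) s a1 a2 = Qf R P γ V s a1 a2 + γ * c := by
  unfold Qf
  have : ∑ s', P s a1 a2 s' * (V s' + c)
      = (∑ s', P s a1 a2 s' * V s') + (∑ s', P s a1 a2 s') * c := by
    rw [Finset.sum_mul]; rw [← Finset.sum_add_distrib]; congr 1; ext s'; ring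
  rw [this, hP.2 s a1 a2]; ring

lemma Tpi_mono (hP : IsKernel P) (hγ0 : 0 ≤ γ) (hπ1 : ∀ s a, 0 ≤ π1 s a)
    (hπ2 : ∀ s a, 0 ≤ π2 s a) {V W : σ → ℝ} (hVW : ∀ s, V s ≤ W s) (s : σ) :
    Tpi R P γ π1 π2 V s ≤ Tpi R P γ π1 π2 W s := by
  refine Finset.sum_le_sum fun a1 _ => Finset.sum_le_sum fun a2 _ => ?_
  exact mul_le_mul_of_nonneg_left (Qf_mono hP hγ0 hVW s a1 a2)
    (mul_nonneg (hπ1 s a1) (hπ2 s a2))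

lemma Tpi_shift (hP : IsKernel P) (hπ1 : IsPolicy π1) (hπ2 : IsPolicy π2)
    (V : σ → ℝ) (c : ℝ) (s : σ) :
    Tpi R P γ π1 π2 (fun t => V t + c) s = Tpi R P γ π1 π2 V s + γ * c := by
  unfold Tpi
  have h1 : ∀ a1 a2, π1 s a1 * π2 s a2 * Qf R P γ (fun t => V t + c) s a1 a2
      = π1 s a1 * π2 s a2 * Qf R P γ V s a1 a2 + π1 s a1 * π2 s a2 * (γ * c) := by
    intro a1 a2; rw [Qf_shift hP]; ring
  simp only [h1, Finset.sum_add_distrib]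
  have h2 : ∑ a1, ∑ a2, π1 s a1 * π2 s a2 * (γ * c) = γ * c := by
    have h3 : ∀ a1, ∑ a2, π1 s a1 * π2 s a2 * (γ * c)
        = π1 s a1 * (γ * c) := by
      intro a1
      rw [show (fun a2 => π1 s a1 * π2 s a2 * (γ * c))
          = fun a2 => (π1 s a1 * (γ * c)) * π2 s a2 by ext a2; ring]
      rw [← Finset.mul_sum, hπ2.2 s, mul_one]
    simp only [h3]
    rw [show (fun a1 => π1 s a1 * (γ * c)) = fun a1 => (γ * c) * π1 s a1 by ext a1; ring]
    rw [← Finset.mul_sum, hπ1.2 s, mul_one]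
  rw [h2]

lemma fixed_le [Nonempty σ] (hP : IsKernel P) (hγ0 : 0 ≤ γ) (hγ1 : γ < 1)
    (hπ1 : IsPolicy π1) (hπ2 : IsPolicy π2) {V U : σ → ℝ} {c : ℝ}
    (hfix : ∀ s, V s = Tpi R P γ π1 π2 V s)
    (hU : ∀ s, Tpi R P γ π1 π2 U s ≤ U s + c) :
    ∀ s, V s ≤ U s + c / (1 - γ) := by
  have h1γ : (0:ℝ) < 1 - γ := by linarith
  set m := univ.sup' univ_nonempty (fun s => V s - U s) with hm_def
  have hm : ∀ s, V s ≤ U s + m := fun s => by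
    have := Finset.le_sup' (fun s => V s - U s) (mem_univ s); simp only [← hm_def] at this
    linarith
  have key : ∀ s, V s ≤ U s + (c + γ * m) := by
    intro s
    have h1 : Tpi R P γ π1 π2 V s ≤ Tpi R P γ π1 π2 (fun t => U t + m) s :=
      Tpi_mono hP hγ0 hπ1.1 hπ2.1 hm s
    have h2 := Tpi_shift (R := R) (γ := γ) hP hπ1 hπ2 U m s
    have h3 := hU s
    have h4 := hfix s
    linarith
  obtain ⟨t, _, ht⟩ := Finset.exists_mem_eq_sup' (univ_nonempty (α := σ))
    (fun s => V s - U s)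
  have hmt : m = V t - U t := hm_def.trans ht
  have hmc : m ≤ c + γ * m := by have := key t; linarith
  have hfin : m ≤ c / (1 - γ) := by rw [le_div_iff₀ h1γ]; nlinarith
  intro s; have := hm s; linarith

lemma fixed_ge [Nonempty σ] (hP : IsKernel P) (hγ0 : 0 ≤ γ) (hγ1 : γ < 1)
    (hπ1 : IsPolicy π1) (hπ2 : IsPolicy π2) {V U : σ → ℝ} {c : ℝ}
    (hfix : ∀ s, V s = Tpi R P γ π1 π2 V s)
    (hU : ∀ s, U s ≤ Tpi R P γ π1 π2 U s + c) :
    ∀ s, U s ≤ V s + c / (1 - γ) := by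
  have h1γ : (0:ℝ) < 1 - γ := by linarith
  set m := univ.sup' univ_nonempty (fun s => U s - V s) with hm_def
  have hm : ∀ s, U s ≤ V s + m := fun s => by
    have := Finset.le_sup' (fun s => U s - V s) (mem_univ s); simp only [← hm_def] at this
    linarith
  have key : ∀ s, U s ≤ V s + (c + γ * m) := by
    intro s
    have h1 : Tpi R P γ π1 π2 U s ≤ Tpi R P γ π1 π2 (fun t => V t + m) s :=
      Tpi_mono hP hγ0 hπ1.1 hπ2.1 hm s
    have h2 := Tpi_shift (R := R) (γ := γ) hP hπ1 hπ2 V m s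
    have h3 := hU s
    have h4 := hfix s
    linarith
  obtain ⟨t, _, ht⟩ := Finset.exists_mem_eq_sup' (univ_nonempty (α := σ))
    (fun s => U s - V s)
  have hmt : m = U t - V t := hm_def.trans ht
  have hmc : m ≤ c + γ * m := by have := key t; linarith
  have hfin : m ≤ c / (1 - γ) := by rw [le_div_iff₀ h1γ]; nlinarith
  intro s; have := hm s; linarith



end ZGaux

namespace ZGaux

variable {σ A1 A2 : Type*} [Fintype σ] [Nonempty σ] [Fintype A1] [Fintype A2]
variable {R : σ → A1 → A2 → ℝ} {P : σ → A1 → A2 → σ → ℝ} {γ : ℝ}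
  {π1 : σ → A1 → ℝ} {π2 : σ → A2 → ℝ}
  {Val : (σ → A1 → ℝ) → (σ → A2 → ℝ) → σ → ℝ}

lemma nash_one (hP : IsKernel P) (hγ0 : 0 ≤ γ) (hγ1 : γ < 1)
    (hVal : IsValueOperator R P γ Val) (hNash : IsNash Val π1 π2) :
    ∀ s b1, ∑ a2, π2 s a2 * Qf R P γ (Val π1 π2) s b1 a2 ≤ Val π1 π2 s := by
  classical
  obtain ⟨hπ1, hπ2, hN⟩ := hNash
  by_contra hcon
  push_neg at hcon
  obtain ⟨s0, b1, hgt⟩ := hcon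
  set V := Val π1 π2 with hVdef
  set π1' : σ → A1 → ℝ :=
    fun s a => if s = s0 then (if a = b1 then 1 else 0) else π1 s a with hπ1'def
  have hπ1'pol : IsPolicy π1' := by
    constructor
    · intro s a; simp only [hπ1'def]
      by_cases hs : s = s0
      · simp only [if_pos hs]; split_ifs <;> norm_num
      · simp only [if_neg hs]; exact hπ1.1 s a
    · intro s; by_cases hs : s = s0
      · subst hs; simp [hπ1'def]
      · simp only [hπ1'def, if_neg hs]; exact hπ1.2 s
  have hW : ∀ s, Val π1' π2 s = Tpi R P γ π1' π2 (Val π1' π2) s :=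
    hVal π1' π2 hπ1'pol hπ2
  have hTs0 : ∀ U : σ → ℝ, Tpi R P γ π1' π2 U s0 = ∑ a2, π2 s0 a2 * Qf R P γ U s0 b1 a2 := by
    intro U
    unfold Tpi
    rw [Finset.sum_eq_single b1]
    · simp [hπ1'def]
    · intro a1 _ hne; simp [hπ1'def, hne]
    · intro h; exact absurd (mem_univ b1) h
  have hTpiV : ∀ s, V s ≤ Tpi R P γ π1' π2 V s + 0 := by
    intro s; rw [add_zero]; by_cases hs : s = s0
    · subst hs; rw [hTs0]; linarith
    · have heq : Tpi R P γ π1' π2 V s = Tpi R P γ π1 π2 V s := by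
        unfold Tpi; simp [hπ1'def, hs]
      rw [heq]
      exact le_of_eq (hVal π1 π2 hπ1 hπ2 s)
  have hVleW : ∀ s, V s ≤ Val π1' π2 s + 0 / (1 - γ) :=
    fixed_ge hP hγ0 hγ1 hπ1'pol hπ2 hW hTpiV
  simp only [zero_div, add_zero] at hVleW
  have h2 : Tpi R P γ π1' π2 V s0 ≤ Tpi R P γ π1' π2 (Val π1' π2) s0 :=
    Tpi_mono hP hγ0 hπ1'pol.1 hπ2.1 hVleW s0
  have h3 : Val π1' π2 s0 ≤ V s0 := hN s0 π1' π2 hπ1'pol hπ2 |>.2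
  have hA : Tpi R P γ π1' π2 V s0 = ∑ a2, π2 s0 a2 * Qf R P γ V s0 b1 a2 := hTs0 V
  have hB : Tpi R P γ π1' π2 (Val π1' π2) s0 = Val π1' π2 s0 := (hW s0).symm
  linarith

lemma nash_two (hP : IsKernel P) (hγ0 : 0 ≤ γ) (hγ1 : γ < 1)
    (hVal : IsValueOperator R P γ Val) (hNash : IsNash Val π1 π2) :
    ∀ s b2, Val π1 π2 s ≤ ∑ a1, π1 s a1 * Qf R P γ (Val π1 π2) s a1 b2 := by
  classical
  obtain ⟨hπ1, hπ2, hN⟩ := hNash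
  by_contra hcon
  push_neg at hcon
  obtain ⟨s0, b2, hgt⟩ := hcon
  set V := Val π1 π2 with hVdef
  set π2' : σ → A2 → ℝ :=
    fun s a => if s = s0 then (if a = b2 then 1 else 0) else π2 s a with hπ2'def
  have hπ2'pol : IsPolicy π2' := by
    constructor
    · intro s a; simp only [hπ2'def]
      by_cases hs : s = s0
      · simp only [if_pos hs]; split_ifs <;> norm_num
      · simp only [if_neg hs]; exact hπ2.1 s a
    · intro s; by_cases hs : s = s0
      · subst hs; simp [hπ2'def]
      · simp only [hπ2'def, if_neg hs]; exact hπ2.2 s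
  have hW : ∀ s, Val π1 π2' s = Tpi R P γ π1 π2' (Val π1 π2') s :=
    hVal π1 π2' hπ1 hπ2'pol
  have hTs0 : ∀ U : σ → ℝ, Tpi R P γ π1 π2' U s0 = ∑ a1, π1 s0 a1 * Qf R P γ U s0 a1 b2 := by
    intro U
    unfold Tpi
    refine Finset.sum_congr rfl fun a1 _ => ?_
    rw [Finset.sum_eq_single b2]
    · simp [hπ2'def]
    · intro a2 _ hne; simp [hπ2'def, hne]
    · intro h; exact absurd (mem_univ b2) h
  have hTpiV : ∀ s, Tpi R P γ π1 π2' V s ≤ V s + 0 := by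
    intro s; rw [add_zero]; by_cases hs : s = s0
    · subst hs; rw [hTs0]; linarith
    · have heq : Tpi R P γ π1 π2' V s = Tpi R P γ π1 π2 V s := by
        unfold Tpi; simp [hπ2'def, hs]
      rw [heq]
      exact le_of_eq (hVal π1 π2 hπ1 hπ2 s).symm
  have hWleV : ∀ s, Val π1 π2' s ≤ V s + 0 / (1 - γ) :=
    fixed_le hP hγ0 hγ1 hπ1 hπ2'pol hW hTpiV
  simp only [zero_div, add_zero] at hWleV
  have h2 : Tpi R P γ π1 π2' (Val π1 π2') s0 ≤ Tpi R P γ π1 π2' V s0 :=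
    Tpi_mono hP hγ0 hπ1.1 hπ2'pol.1 hWleV s0
  have h3 : V s0 ≤ Val π1 π2' s0 := hN s0 π1 π2' hπ1 hπ2'pol |>.1
  have hA : Tpi R P γ π1 π2' V s0 = ∑ a1, π1 s0 a1 * Qf R P γ V s0 a1 b2 := hTs0 V
  have hB : Tpi R P γ π1 π2' (Val π1 π2') s0 = Val π1 π2' s0 := (hW s0).symm
  linarith

end ZGaux

namespace ZGaux

section E2
variable {A1 A2 : Type*} [Fintype A1] [Fintype A2]
  {p : A1 → ℝ} {q : A2 → ℝ} {f g : A1 → A2 → ℝ} {v c : ℝ}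

lemma e2_le_left (hp0 : ∀ a, 0 ≤ p a) (hp1 : ∑ a, p a = 1)
    (h : ∀ a1, ∑ a2, q a2 * f a1 a2 ≤ v) :
    ∑ a1, ∑ a2, p a1 * q a2 * f a1 a2 ≤ v := by
  have : ∀ a1, ∑ a2, p a1 * q a2 * f a1 a2 = p a1 * ∑ a2, q a2 * f a1 a2 := by
    intro a1; rw [Finset.mul_sum]; congr 1; ext a2; ring
  calc ∑ a1, ∑ a2, p a1 * q a2 * f a1 a2 = ∑ a1, p a1 * ∑ a2, q a2 * f a1 a2 := by
        simp only [this]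
    _ ≤ ∑ a1, p a1 * v :=
        Finset.sum_le_sum fun a1 _ => mul_le_mul_of_nonneg_left (h a1) (hp0 a1)
    _ = v := by rw [← Finset.sum_mul, hp1, one_mul]

lemma e2_ge_right (hq0 : ∀ a, 0 ≤ q a) (hq1 : ∑ a, q a = 1)
    (h : ∀ a2, v ≤ ∑ a1, p a1 * f a1 a2) :
    v ≤ ∑ a1, ∑ a2, p a1 * q a2 * f a1 a2 := by
  rw [Finset.sum_comm]
  have : ∀ a2, ∑ a1, p a1 * q a2 * f a1 a2 = q a2 * ∑ a1, p a1 * f a1 a2 := by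
    intro a2; rw [Finset.mul_sum]; congr 1; ext a1; ring
  calc v = ∑ a2, q a2 * v := by rw [← Finset.sum_mul, hq1, one_mul]
    _ ≤ ∑ a2, q a2 * ∑ a1, p a1 * f a1 a2 :=
        Finset.sum_le_sum fun a2 _ => mul_le_mul_of_nonneg_left (h a2) (hq0 a2)
    _ = ∑ a2, ∑ a1, p a1 * q a2 * f a1 a2 := by simp only [this]

lemma e2_le_e2_add (hp0 : ∀ a, 0 ≤ p a) (hp1 : ∑ a, p a = 1)
    (hq0 : ∀ a, 0 ≤ q a) (hq1 : ∑ a, q a = 1)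
    (h : ∀ a1 a2, f a1 a2 ≤ g a1 a2 + c) :
    ∑ a1, ∑ a2, p a1 * q a2 * f a1 a2 ≤ (∑ a1, ∑ a2, p a1 * q a2 * g a1 a2) + c := by
  have hsum : ∑ a1, ∑ a2, p a1 * q a2 * c = c := by
    have h1 : ∀ a1 : A1, ∑ a2, p a1 * q a2 * c = p a1 * c := by
      intro a1
      rw [show (fun a2 => p a1 * q a2 * c) = fun a2 => (p a1 * c) * q a2 by ext a2; ring]
      rw [← Finset.mul_sum, hq1, mul_one]
    simp only [h1]
    rw [show (fun a1 => p a1 * c) = fun a1 => c * p a1 by ext a1; ring]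
    rw [← Finset.mul_sum, hp1, mul_one]
  calc ∑ a1, ∑ a2, p a1 * q a2 * f a1 a2
      ≤ ∑ a1, ∑ a2, (p a1 * q a2 * g a1 a2 + p a1 * q a2 * c) := by
        refine Finset.sum_le_sum fun a1 _ => Finset.sum_le_sum fun a2 _ => ?_
        have := mul_le_mul_of_nonneg_left (h a1 a2) (mul_nonneg (hp0 a1) (hq0 a2))
        nlinarith [this]
    _ = (∑ a1, ∑ a2, p a1 * q a2 * g a1 a2) + c := by
        simp only [Finset.sum_add_distrib]; rw [hsum]

end E2

section Abs

variable {S SA A1 A2 : Type*} [Fintype S] [Fintype SA] [DecidableEq SA]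
  [Fintype A1] [Fintype A2]
  {P : S → A1 → A2 → S → ℝ} {R : S → A1 → A2 → ℝ} {γ : ℝ}
  {φ : S → SA} {w : S → ℝ}

lemma PA_kernel (hP : IsKernel P) (hw : IsAggWeight φ w) : IsKernel (PA P φ w) := by
  constructor
  · intro sA a1 a2 sA'
    refine Finset.sum_nonneg fun s _ => Finset.sum_nonneg fun s' _ => ?_
    exact mul_nonneg (hP.1 s a1 a2 s') (hw.1 s).1
  · intro sA a1 a2
    unfold PA
    rw [Finset.sum_comm]
    have h1 : ∀ s ∈ univ.filter (fun s => φ s = sA),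
        ∑ sA', ∑ s' ∈ univ.filter (fun s' => φ s' = sA'), P s a1 a2 s' * w s = w s := by
      intro s _
      rw [Finset.sum_fiberwise univ φ (fun s' => P s a1 a2 s' * w s)]
      rw [← Finset.sum_mul, hP.2 s a1 a2, one_mul]
    rw [Finset.sum_congr rfl h1]
    exact hw.2 sA

/-- Expansion of the abstract `Qf` at an aggregated state in terms of ground data. -/
lemma QA_expand (VA' : SA → ℝ) (s : S) (a1 : A1) (a2 : A2) :
    Qf (RA R φ w) (PA P φ w) γ VA' (φ s) a1 a2
      = ∑ g ∈ univ.filter (fun g => φ g = φ s),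
          w g * (R g a1 a2 + γ * ∑ s', P g a1 a2 s' * VA' (φ s')) := by
  unfold Qf RA
  have hPexp : ∑ sA', PA P φ w (φ s) a1 a2 sA' * VA' sA'
      = ∑ g ∈ univ.filter (fun g => φ g = φ s), w g * ∑ s', P g a1 a2 s' * VA' (φ s') := by
    unfold PA
    have h1 : ∀ sA', (∑ g ∈ univ.filter (fun g => φ g = φ s),
        ∑ s' ∈ univ.filter (fun s' => φ s' = sA'), P g a1 a2 s' * w g) * VA' sA'
        = ∑ g ∈ univ.filter (fun g => φ g = φ s),
            ∑ s' ∈ univ.filter (fun s' => φ s' = sA'), P g a1 a2 s' * w g * VA' (φ s') := by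
      intro sA'
      rw [Finset.sum_mul]
      refine Finset.sum_congr rfl fun g _ => ?_
      rw [Finset.sum_mul]
      refine Finset.sum_congr rfl fun s' hs' => ?_
      rw [(mem_filter.mp hs').2]
    simp only [h1]
    rw [Finset.sum_comm]
    refine Finset.sum_congr rfl fun g _ => ?_
    rw [Finset.sum_fiberwise univ φ (fun s' => P g a1 a2 s' * w g * VA' (φ s'))]
    rw [Finset.mul_sum]
    refine Finset.sum_congr rfl fun s' _ => ?_
    ring
  rw [hPexp, Finset.mul_sum, ← Finset.sum_add_distrib]
  refine Finset.sum_congr rfl fun g _ => ?_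
  ring

/-- Weighted-average bound over a fiber. -/
lemma fiber_avg_abs (hw : IsAggWeight φ w) (t : SA) (x : S → ℝ) (y c : ℝ)
    (h : ∀ g ∈ univ.filter (fun g => φ g = t), |x g - y| ≤ c) :
    |(∑ g ∈ univ.filter (fun g => φ g = t), w g * x g) - y| ≤ c := by
  have hy : ∑ g ∈ univ.filter (fun g => φ g = t), w g * y = y := by
    rw [← Finset.sum_mul, hw.2 t, one_mul]
  have hdiff : ∑ g ∈ univ.filter (fun g => φ g = t), w g * (x g - y)
      = (∑ g ∈ univ.filter (fun g => φ g = t), w g * x g) - y := by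
    calc ∑ g ∈ univ.filter (fun g => φ g = t), w g * (x g - y)
        = ∑ g ∈ univ.filter (fun g => φ g = t), (w g * x g - w g * y) :=
          Finset.sum_congr rfl fun g _ => by ring
      _ = (∑ g ∈ univ.filter (fun g => φ g = t), w g * x g)
            - ∑ g ∈ univ.filter (fun g => φ g = t), w g * y := Finset.sum_sub_distrib _ _
      _ = (∑ g ∈ univ.filter (fun g => φ g = t), w g * x g) - y := by rw [hy]
  rw [← hdiff]
  calc |∑ g ∈ univ.filter (fun g => φ g = t), w g * (x g - y)|
      ≤ ∑ g ∈ univ.filter (fun g => φ g = t), |w g * (x g - y)| :=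
        Finset.abs_sum_le_sum_abs _ _
    _ ≤ ∑ g ∈ univ.filter (fun g => φ g = t), w g * c := by
        refine Finset.sum_le_sum fun g hg => ?_
        rw [abs_mul, abs_of_nonneg (hw.1 g).1]
        exact mul_le_mul_of_nonneg_left (h g hg) (hw.1 g).1
    _ = c := by rw [← Finset.sum_mul, hw.2 t, one_mul]

end Abs

end ZGaux

namespace ZGaux
section Extra
set_option linter.unusedSectionVars false

lemma row_avg_abs {σ A1 A2 : Type*} [Fintype σ] {P : σ → A1 → A2 → σ → ℝ}
    (hP : IsKernel P) (s : σ) (a1 : A1) (a2 : A2) (f : σ → ℝ) (d : ℝ)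
    (hd : ∀ s', |f s'| ≤ d) : |∑ s', P s a1 a2 s' * f s'| ≤ d := by
  calc |∑ s', P s a1 a2 s' * f s'| ≤ ∑ s', |P s a1 a2 s' * f s'| :=
        Finset.abs_sum_le_sum_abs _ _
    _ ≤ ∑ s', P s a1 a2 s' * d := by
        refine Finset.sum_le_sum fun s' _ => ?_
        rw [abs_mul, abs_of_nonneg (hP.1 s a1 a2 s')]
        exact mul_le_mul_of_nonneg_left (hd s') (hP.1 s a1 a2 s')
    _ = d := by rw [← Finset.sum_mul, hP.2 s a1 a2, one_mul]

lemma e1_le_e1_add {A : Type*} [Fintype A] {q : A → ℝ} (hq0 : ∀ a, 0 ≤ q a)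
    (hq1 : ∑ a, q a = 1) {x y : A → ℝ} {c : ℝ} (h : ∀ a, x a ≤ y a + c) :
    ∑ a, q a * x a ≤ (∑ a, q a * y a) + c := by
  calc ∑ a, q a * x a ≤ ∑ a, q a * (y a + c) :=
        Finset.sum_le_sum fun a _ => mul_le_mul_of_nonneg_left (h a) (hq0 a)
    _ = (∑ a, q a * y a) + (∑ a, q a) * c := by
        rw [Finset.sum_mul, ← Finset.sum_add_distrib]
        exact Finset.sum_congr rfl fun a _ => by ring
    _ = (∑ a, q a * y a) + c := by rw [hq1, one_mul]

end Extra
end ZGaux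

set_option maxHeartbeats 1000000 in
theorem exploitability_bound_minimax_value_abstraction
    {S SA A1 A2 : Type*}
    [Fintype S] [Nonempty S] [Fintype SA] [DecidableEq SA]
    [Fintype A1] [Nonempty A1] [Fintype A2] [Nonempty A2]
    (P : S → A1 → A2 → S → ℝ) (R : S → A1 → A2 → ℝ) (γ : ℝ)
    (hP : IsKernel P) (hR : IsReward R) (hγ0 : 0 ≤ γ) (hγ1 : γ < 1)
    (Val : (S → A1 → ℝ) → (S → A2 → ℝ) → S → ℝ)
    (hVal : IsValueOperator R P γ Val)
    (φ : S → SA) (hφ : Function.Surjective φ)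
    (w : S → ℝ) (hw : IsAggWeight φ w)
    (ValA : (SA → A1 → ℝ) → (SA → A2 → ℝ) → SA → ℝ)
    (hValA : IsValueOperator (RA R φ w) (PA P φ w) γ ValA)
    (πA1 : SA → A1 → ℝ) (πA2 : SA → A2 → ℝ)
    (hNashA : IsNash ValA πA1 πA2)
    (π1s : S → A1 → ℝ) (π2s : S → A2 → ℝ)
    (hNash : IsNash Val π1s π2s)
    (π1d : S → A1 → ℝ)
    (hBR : IsBestResponse1 Val π1d (fun s => πA2 (φ s)))
    (ε : ℝ) (hε : 0 ≤ ε)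
    (hagg : ∀ s1 s2 : S, φ s1 = φ s2 → ∀ (a1 : A1) (a2 : A2),
      |Qf R P γ (Val π1s π2s) s1 a1 a2 - Qf R P γ (Val π1s π2s) s2 a1 a2| ≤ ε)
    :
    ∀ s : S,
      Val π1d (fun s => πA2 (φ s)) s - Val (fun s => πA1 (φ s)) (fun s => πA2 (φ s)) s
        ≤ 6 * ε / (1 - γ) ^ 3 := by
  classical
  haveI : Nonempty SA := ⟨φ (Classical.arbitrary S)⟩
  have h1γ : (0:ℝ) < 1 - γ := by linarith
  -- policies
  have hπA1 : IsPolicy πA1 := hNashA.1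
  have hπA2 : IsPolicy πA2 := hNashA.2.1
  have hπ1s : IsPolicy π1s := hNash.1
  have hπ2s : IsPolicy π2s := hNash.2.1
  have hπ1d : IsPolicy π1d := hBR.1
  have hπG1 : IsPolicy (fun s : S => πA1 (φ s)) := ⟨fun s a => hπA1.1 _ a, fun s => hπA1.2 _⟩
  have hπG2 : IsPolicy (fun s : S => πA2 (φ s)) := ⟨fun s a => hπA2.1 _ a, fun s => hπA2.2 _⟩
  have hPA : IsKernel (PA P φ w) := ZGaux.PA_kernel hP hw
  -- values
  set Vst : S → ℝ := Val π1s π2s with hVst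
  set Vab : SA → ℝ := ValA πA1 πA2 with hVab
  -- one-step Nash properties
  have hg1 : ∀ s b1, ∑ a2, π2s s a2 * Qf R P γ Vst s b1 a2 ≤ Vst s :=
    ZGaux.nash_one hP hγ0 hγ1 hVal hNash
  have hg2 : ∀ s b2, Vst s ≤ ∑ a1, π1s s a1 * Qf R P γ Vst s a1 b2 :=
    ZGaux.nash_two hP hγ0 hγ1 hVal hNash
  have ha1 : ∀ sA b1, ∑ a2, πA2 sA a2 * Qf (RA R φ w) (PA P φ w) γ Vab sA b1 a2 ≤ Vab sA :=
    ZGaux.nash_one hPA hγ0 hγ1 hValA hNashA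
  have ha2 : ∀ sA b2, Vab sA ≤ ∑ a1, πA1 sA a1 * Qf (RA R φ w) (PA P φ w) γ Vab sA a1 b2 :=
    ZGaux.nash_two hPA hγ0 hγ1 hValA hNashA
  -- the sup of |Vab ∘ φ - Vst|
  set D : ℝ := univ.sup' univ_nonempty (fun t : S => |Vab (φ t) - Vst t|) with hDdef
  have hDle : ∀ t, |Vab (φ t) - Vst t| ≤ D := fun t =>
    Finset.le_sup' (fun t : S => |Vab (φ t) - Vst t|) (mem_univ t)
  have hD0 : 0 ≤ D := le_trans (abs_nonneg _) (hDle (Classical.arbitrary S))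
  -- Q-difference bound
  have hQd : ∀ (d : ℝ), (∀ t, |Vab (φ t) - Vst t| ≤ d) → ∀ (t : S) (a1 : A1) (a2 : A2),
      |Qf (RA R φ w) (PA P φ w) γ Vab (φ t) a1 a2 - Qf R P γ Vst t a1 a2| ≤ ε + γ * d := by
    intro d hd t a1 a2
    rw [ZGaux.QA_expand]
    refine ZGaux.fiber_avg_abs hw (φ t) _ _ _ fun g hg => ?_
    have hgφ : φ g = φ t := (mem_filter.mp hg).2
    have h1 : |(R g a1 a2 + γ * ∑ s', P g a1 a2 s' * Vab (φ s')) - Qf R P γ Vst g a1 a2|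
        ≤ γ * d := by
      have heq : (R g a1 a2 + γ * ∑ s', P g a1 a2 s' * Vab (φ s')) - Qf R P γ Vst g a1 a2
          = γ * ∑ s', P g a1 a2 s' * (Vab (φ s') - Vst s') := by
        unfold Qf
        have : ∑ s', P g a1 a2 s' * (Vab (φ s') - Vst s')
            = (∑ s', P g a1 a2 s' * Vab (φ s')) - ∑ s', P g a1 a2 s' * Vst s' := by
          rw [← Finset.sum_sub_distrib]
          exact Finset.sum_congr rfl fun s' _ => by ring
        rw [this]; ring
      rw [heq, abs_mul, abs_of_nonneg hγ0]
      exact mul_le_mul_of_nonneg_left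
        (ZGaux.row_avg_abs hP g a1 a2 _ d (fun s' => hd s')) hγ0
    have h2 : |Qf R P γ Vst g a1 a2 - Qf R P γ Vst t a1 a2| ≤ ε := hagg g t hgφ a1 a2
    calc |(R g a1 a2 + γ * ∑ s', P g a1 a2 s' * Vab (φ s')) - Qf R P γ Vst t a1 a2|
        = |((R g a1 a2 + γ * ∑ s', P g a1 a2 s' * Vab (φ s')) - Qf R P γ Vst g a1 a2)
            + (Qf R P γ Vst g a1 a2 - Qf R P γ Vst t a1 a2)| := by ring_nf
      _ ≤ |(R g a1 a2 + γ * ∑ s', P g a1 a2 s' * Vab (φ s')) - Qf R P γ Vst g a1 a2|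
            + |Qf R P γ Vst g a1 a2 - Qf R P γ Vst t a1 a2| := abs_add_le _ _
      _ ≤ ε + γ * d := by linarith
  -- recursion for D
  have hQD := hQd D hDle
  have hDrec : D ≤ ε + γ * D := by
    obtain ⟨t, _, ht⟩ := Finset.exists_mem_eq_sup' (univ_nonempty (α := S))
      (fun t : S => |Vab (φ t) - Vst t|)
    have hub : Vab (φ t) - Vst t ≤ ε + γ * D := by
      have l1 : Vab (φ t) ≤ ∑ a1, ∑ a2, πA1 (φ t) a1 * π2s t a2
          * Qf (RA R φ w) (PA P φ w) γ Vab (φ t) a1 a2 :=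
        ZGaux.e2_ge_right (hπ2s.1 t) (hπ2s.2 t) (fun a2 => ha2 (φ t) a2)
      have l2 : ∑ a1, ∑ a2, πA1 (φ t) a1 * π2s t a2
            * Qf (RA R φ w) (PA P φ w) γ Vab (φ t) a1 a2
          ≤ (∑ a1, ∑ a2, πA1 (φ t) a1 * π2s t a2 * Qf R P γ Vst t a1 a2) + (ε + γ * D) :=
        ZGaux.e2_le_e2_add (hπA1.1 _) (hπA1.2 _) (hπ2s.1 t) (hπ2s.2 t) fun a1 a2 => by
          have := abs_le.mp (hQD t a1 a2); linarith [this.1, this.2]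
      have l3 : ∑ a1, ∑ a2, πA1 (φ t) a1 * π2s t a2 * Qf R P γ Vst t a1 a2 ≤ Vst t :=
        ZGaux.e2_le_left (hπA1.1 _) (hπA1.2 _) (fun a1 => hg1 t a1)
      linarith
    have hlb : Vst t - Vab (φ t) ≤ ε + γ * D := by
      have l1 : Vst t ≤ ∑ a1, ∑ a2, π1s t a1 * πA2 (φ t) a2 * Qf R P γ Vst t a1 a2 :=
        ZGaux.e2_ge_right (hπA2.1 _) (hπA2.2 _) (fun a2 => hg2 t a2)
      have l2 : ∑ a1, ∑ a2, π1s t a1 * πA2 (φ t) a2 * Qf R P γ Vst t a1 a2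
          ≤ (∑ a1, ∑ a2, π1s t a1 * πA2 (φ t) a2
              * Qf (RA R φ w) (PA P φ w) γ Vab (φ t) a1 a2) + (ε + γ * D) :=
        ZGaux.e2_le_e2_add (hπ1s.1 t) (hπ1s.2 t) (hπA2.1 _) (hπA2.2 _) fun a1 a2 => by
          have := abs_le.mp (hQD t a1 a2); linarith [this.1, this.2]
      have l3 : ∑ a1, ∑ a2, π1s t a1 * πA2 (φ t) a2
          * Qf (RA R φ w) (PA P φ w) γ Vab (φ t) a1 a2 ≤ Vab (φ t) :=
        ZGaux.e2_le_left (hπ1s.1 t) (hπ1s.2 t) (fun a1 => ha1 (φ t) a1)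
      linarith
    have hDt : D = |Vab (φ t) - Vst t| := hDdef.trans ht
    rw [hDt]
    exact abs_sub_le_iff.mpr ⟨by rw [← hDt]; linarith, by rw [← hDt]; linarith⟩
  -- step C : best-response value upper bound
  have hfixd : ∀ t, Val π1d (fun s => πA2 (φ s)) t
      = ZGaux.Tpi R P γ π1d (fun s => πA2 (φ s)) (Val π1d (fun s => πA2 (φ s))) t :=
    hVal π1d (fun s => πA2 (φ s)) hπ1d hπG2
  have hC : ∀ t, ZGaux.Tpi R P γ π1d (fun s => πA2 (φ s)) Vst t ≤ Vst t + ((ε + γ * D) + D) := by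
    intro t
    show ∑ a1, ∑ a2, π1d t a1 * πA2 (φ t) a2 * Qf R P γ Vst t a1 a2
        ≤ Vst t + ((ε + γ * D) + D)
    refine ZGaux.e2_le_left (hπ1d.1 t) (hπ1d.2 t) fun a1 => ?_
    have m1 : ∑ a2, πA2 (φ t) a2 * Qf R P γ Vst t a1 a2
        ≤ (∑ a2, πA2 (φ t) a2 * Qf (RA R φ w) (PA P φ w) γ Vab (φ t) a1 a2) + (ε + γ * D) :=
      ZGaux.e1_le_e1_add (hπA2.1 _) (hπA2.2 _) fun a2 => by
        have := abs_le.mp (hQD t a1 a2); linarith [this.1, this.2]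
    have m2 := ha1 (φ t) a1
    have m3 := abs_le.mp (hDle t)
    linarith [m3.1, m3.2]
  have hCle : ∀ t, Val π1d (fun s => πA2 (φ s)) t ≤ Vst t + ((ε + γ * D) + D) / (1 - γ) :=
    ZGaux.fixed_le hP hγ0 hγ1 hπ1d hπG2 hfixd hC
  -- step D : ground profile lower bound
  have hfixG : ∀ t, Val (fun s => πA1 (φ s)) (fun s => πA2 (φ s)) t
      = ZGaux.Tpi R P γ (fun s => πA1 (φ s)) (fun s => πA2 (φ s))
          (Val (fun s => πA1 (φ s)) (fun s => πA2 (φ s))) t :=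
    hVal (fun s => πA1 (φ s)) (fun s => πA2 (φ s)) hπG1 hπG2
  have hDge : ∀ t, Vst t ≤ ZGaux.Tpi R P γ (fun s => πA1 (φ s)) (fun s => πA2 (φ s)) Vst t
      + ((ε + γ * D) + D) := by
    intro t
    have hTpi : ZGaux.Tpi R P γ (fun s => πA1 (φ s)) (fun s => πA2 (φ s)) Vst t
        = ∑ a1, ∑ a2, πA1 (φ t) a1 * πA2 (φ t) a2 * Qf R P γ Vst t a1 a2 := rfl
    have b1 : Vab (φ t) = ∑ a1, ∑ a2, πA1 (φ t) a1 * πA2 (φ t) a2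
        * Qf (RA R φ w) (PA P φ w) γ Vab (φ t) a1 a2 := hValA πA1 πA2 hπA1 hπA2 (φ t)
    have b2 : ∑ a1, ∑ a2, πA1 (φ t) a1 * πA2 (φ t) a2
          * Qf (RA R φ w) (PA P φ w) γ Vab (φ t) a1 a2
        ≤ (∑ a1, ∑ a2, πA1 (φ t) a1 * πA2 (φ t) a2 * Qf R P γ Vst t a1 a2) + (ε + γ * D) :=
      ZGaux.e2_le_e2_add (hπA1.1 _) (hπA1.2 _) (hπA2.1 _) (hπA2.2 _) fun a1 a2 => by
        have := abs_le.mp (hQD t a1 a2); linarith [this.1, this.2]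
    have b3 := abs_le.mp (hDle t)
    rw [hTpi]
    linarith [b3.1, b3.2]
  have hGge : ∀ t, Vst t ≤ Val (fun s => πA1 (φ s)) (fun s => πA2 (φ s)) t
      + ((ε + γ * D) + D) / (1 - γ) :=
    ZGaux.fixed_ge hP hγ0 hγ1 hπG1 hπG2 hfixG hDge
  -- conclusion
  intro s
  have hCs := hCle s
  have hGs := hGge s
  have hsum : (ε + γ * D) + D ≤ 2 * ε / (1 - γ) := by
    rw [le_div_iff₀ h1γ]
    nlinarith [hDrec, hD0, mul_nonneg hγ0 hD0]
  have hfin : ((ε + γ * D) + D) / (1 - γ) + ((ε + γ * D) + D) / (1 - γ)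
      ≤ 6 * ε / (1 - γ) ^ 3 := by
    rw [← add_div, div_le_div_iff₀ h1γ (by positivity)]
    have h2 : ((ε + γ * D) + D) * (1 - γ) ≤ 2 * ε := (le_div_iff₀ h1γ).mp hsum
    nlinarith [h2, mul_nonneg hε (le_of_lt h1γ), sq_nonneg (1 - γ),
      mul_nonneg (mul_nonneg hε (le_of_lt h1γ)) (le_of_lt h1γ),
      mul_le_mul_of_nonneg_right h2 (sq_nonneg (1 - γ))]
  linarith
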